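/- Define h : ℝ → ℝ by h(t) = t·g(t) with g(t) = aₙt⁴ + bₙt² + cₙ, where for an integer n ≥ 2: aₙ = (1+2n)/(2n³(1+n)²), bₙ = −(1+2n+3n²+4n³)/(2n³(1+n)²), cₙ = (3+6n+4n²+2n³)/(2n(1+n)²). Then h(0) = 0, h(1) = h(n) = 1, h'(n) = 0, h is increasing on [n, ∞), h(t) ≥ 1 for all t ∈ (1, n), and h([0,∞)) = [0,∞); consequently h([μ,∞)) = [1,∞) for every μ with 1 ≤ μ ≤ n. -/

import Mathlib

set_option maxHeartbeats 1600000 in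
/-- Properties of the auxiliary quintic h(t) = t(aₙt⁴ + bₙt² + cₙ). -/
theorem stmt_17 (n : ℕ) (hn : 2 ≤ n) (a b c : ℝ)
    (ha : a = (1 + 2 * (n : ℝ)) / (2 * (n : ℝ) ^ 3 * (1 + (n : ℝ)) ^ 2))
    (hb : b = -((1 + 2 * (n : ℝ) + 3 * (n : ℝ) ^ 2 + 4 * (n : ℝ) ^ 3) /
      (2 * (n : ℝ) ^ 3 * (1 + (n : ℝ)) ^ 2)))
    (hc : c = (3 + 6 * (n : ℝ) + 4 * (n : ℝ) ^ 2 + 2 * (n : ℝ) ^ 3) /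
      (2 * (n : ℝ) * (1 + (n : ℝ)) ^ 2))
    (h : ℝ → ℝ) (hh : h = fun t => t * (a * t ^ 4 + b * t ^ 2 + c)) :
    h 0 = 0 ∧ h 1 = 1 ∧ h (n : ℝ) = 1 ∧ deriv h (n : ℝ) = 0 ∧
    StrictMonoOn h (Set.Ici (n : ℝ)) ∧
    (∀ t : ℝ, 1 < t → t < (n : ℝ) → 1 ≤ h t) ∧
    h '' Set.Ici 0 = Set.Ici 0 ∧
    (∀ μ : ℝ, 1 ≤ μ → μ ≤ (n : ℝ) → h '' Set.Ici μ = Set.Ici 1) := by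
  have hN : (2:ℝ) ≤ (n:ℝ) := by exact_mod_cast hn
  set N : ℝ := (n : ℝ) with hNdef
  have hN0 : (0:ℝ) < N := by linarith
  have hN1 : (0:ℝ) < 1 + N := by linarith
  have hpoly : h = fun t : ℝ => a * t ^ 5 + b * t ^ 3 + c * t := by
    rw [hh]; funext t; ring
  have hh' : ∀ t : ℝ, h t = a * t ^ 5 + b * t ^ 3 + c * t := by
    intro t; rw [hpoly]
  have hcont : Continuous h := by rw [hpoly]; continuity
  have h0 : h 0 = 0 := by rw [hh' 0]; ring
  have h1 : h 1 = 1 := by rw [hh' 1, ha, hb, hc]; field_simp; ring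
  have hhN : h N = 1 := by rw [hh' N, ha, hb, hc]; field_simp; ring
  have hd : ∀ x : ℝ, HasDerivAt h (5 * a * x ^ 4 + 3 * b * x ^ 2 + c) x := by
    intro x
    rw [hpoly]
    have h5 := (hasDerivAt_pow 5 x).const_mul a
    have h3 := (hasDerivAt_pow 3 x).const_mul b
    have h1' := (hasDerivAt_id x).const_mul c
    exact ((h5.add h3).add h1').congr_deriv (by push_cast; ring)
  have derivN : deriv h N = 0 := by
    rw [(hd N).deriv, ha, hb, hc]; field_simp; ring
  have key1 : ∀ t : ℝ, 1 ≤ t → t ≤ N → 1 ≤ h t := by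
    intro t ht1 htN
    have id1 : 2 * N ^ 3 * (1 + N) ^ 2 * (1 + 2 * N) * (h t - 1) =
        (t - 1) * (t - N) ^ 2 *
          ((1 + 2 * N) ^ 2 * t ^ 2 + (1 + 2 * N) ^ 3 * t + 2 * N * (1 + N) ^ 2 * (1 + 2 * N)) := by
      rw [hh' t, ha, hb, hc]; field_simp; ring
    have hq : 0 ≤ (1 + 2 * N) ^ 2 * t ^ 2 + (1 + 2 * N) ^ 3 * t +
        2 * N * (1 + N) ^ 2 * (1 + 2 * N) := by positivity
    have hrhs : 0 ≤ (t - 1) * (t - N) ^ 2 *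
        ((1 + 2 * N) ^ 2 * t ^ 2 + (1 + 2 * N) ^ 3 * t + 2 * N * (1 + N) ^ 2 * (1 + 2 * N)) :=
      mul_nonneg (mul_nonneg (by linarith) (sq_nonneg _)) hq
    have hD : 0 < 2 * N ^ 3 * (1 + N) ^ 2 * (1 + 2 * N) := by positivity
    nlinarith [id1, hrhs, hD]
  have key2 : ∀ x : ℝ, N < x → 0 < deriv h x := by
    intro x hx
    have id2 : 10 * N ^ 3 * (1 + N) ^ 2 * (1 + 2 * N) * deriv h x =
        5 * (1 + 2 * N) * (x ^ 2 - N ^ 2) *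
          (5 * (1 + 2 * N) * x ^ 2 - (3 + 6 * N + 4 * N ^ 2 + 2 * N ^ 3)) := by
      rw [(hd x).deriv, ha, hb, hc]; field_simp; ring
    have hx0 : 0 < x := by linarith
    have hsq : 0 < x ^ 2 - N ^ 2 := by nlinarith
    have hq : 0 < 5 * (1 + 2 * N) * x ^ 2 - (3 + 6 * N + 4 * N ^ 2 + 2 * N ^ 3) := by
      nlinarith [hsq, hN]
    have hrhs : 0 < 5 * (1 + 2 * N) * (x ^ 2 - N ^ 2) *
        (5 * (1 + 2 * N) * x ^ 2 - (3 + 6 * N + 4 * N ^ 2 + 2 * N ^ 3)) := by positivity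
    have hD : 0 < 10 * N ^ 3 * (1 + N) ^ 2 * (1 + 2 * N) := by positivity
    nlinarith [id2, hrhs, hD]
  have hmono : StrictMonoOn h (Set.Ici N) := by
    apply strictMonoOn_of_deriv_pos (convex_Ici N) hcont.continuousOn
    intro x hx
    rw [interior_Ici] at hx
    exact key2 x hx
  have ha0 : 0 < a := by rw [ha]; positivity
  have hc0 : 0 < c := by rw [hc]; positivity
  have hb0 : b < 0 := by
    rw [hb]
    have : 0 < (1 + 2 * N + 3 * N ^ 2 + 4 * N ^ 3) / (2 * N ^ 3 * (1 + N) ^ 2) := by positivity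
    linarith
  have habc : a + b + c = 1 := by
    have := h1; rw [hh' 1] at this; nlinarith [this]
  have ha1 : a ≤ 1 := by
    rw [ha, div_le_one (by positivity)]
    nlinarith [hN, mul_pos (mul_pos hN0 hN0) hN0, sq_nonneg (1 + N), mul_pos hN0 hN0]
  have hbig : ∀ y : ℝ, ∃ M : ℝ, N ≤ M ∧ y ≤ h M := by
    intro y
    refine ⟨max ((1 - b) / a) (max y (max 1 N)), ?_, ?_⟩
    · exact le_trans (le_max_right _ _) (le_trans (le_max_right _ _) (le_max_right _ _))
    · set M := max ((1 - b) / a) (max y (max 1 N)) with hM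
      have hM1 : (1:ℝ) ≤ M :=
        le_trans (le_max_left _ _) (le_trans (le_max_right _ _) (le_max_right _ _))
      have hMy : y ≤ M := le_trans (le_max_left _ _) (le_max_right _ _)
      have hMa : (1 - b) / a ≤ M := le_max_left _ _
      have hM0 : 0 < M := by linarith
      have hab : 1 - b ≤ a * M := by
        rw [div_le_iff₀ ha0] at hMa; linarith
      have haM2 : 1 ≤ a * M ^ 2 + b := by nlinarith
      have e : h M = M ^ 3 * (a * M ^ 2 + b) + c * M := by rw [hh' M]; ring
      have t1 : M ≤ M ^ 3 := by nlinarith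
      have t2 : M ^ 3 ≤ M ^ 3 * (a * M ^ 2 + b) :=
        le_mul_of_one_le_right (by positivity) haM2
      have t3 : 0 ≤ c * M := by positivity
      linarith
  have hge0 : ∀ t : ℝ, 0 ≤ t → 0 ≤ h t := by
    intro t ht
    by_cases ht1 : t ≤ 1
    · have ht2 : t ^ 2 ≤ 1 := by nlinarith
      have hg : 0 ≤ a * t ^ 4 + b * t ^ 2 + c := by nlinarith [sq_nonneg (t^2)]
      rw [hh]
      exact mul_nonneg ht (by nlinarith [hg])
    · push_neg at ht1
      by_cases htN : t ≤ N
      · linarith [key1 t ht1.le htN]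
      · push_neg at htN
        have := hmono.monotoneOn (Set.self_mem_Ici) (Set.mem_Ici.mpr htN.le) htN.le
        linarith [hhN ▸ this]
  have himage0 : h '' Set.Ici 0 = Set.Ici 0 := by
    ext y
    constructor
    · rintro ⟨t, ht, rfl⟩
      exact Set.mem_Ici.mpr (hge0 t (Set.mem_Ici.mp ht))
    · intro hy
      rw [Set.mem_Ici] at hy
      obtain ⟨M, hMN, hMy⟩ := hbig y
      have hM0 : (0:ℝ) ≤ M := by linarith
      obtain ⟨t, ht, hty⟩ := intermediate_value_Icc hM0 hcont.continuousOn
        (Set.mem_Icc.mpr ⟨by rw [h0]; exact hy, hMy⟩)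
      exact ⟨t, Set.mem_Ici.mpr ht.1, hty⟩
  have himage1 : ∀ μ : ℝ, 1 ≤ μ → μ ≤ N → h '' Set.Ici μ = Set.Ici 1 := by
    intro μ hμ1 hμN
    ext y
    constructor
    · rintro ⟨t, ht, rfl⟩
      rw [Set.mem_Ici] at ht ⊢
      by_cases htN : t ≤ N
      · exact key1 t (le_trans hμ1 ht) htN
      · push_neg at htN
        have := hmono.monotoneOn (Set.self_mem_Ici) (Set.mem_Ici.mpr htN.le) htN.le
        linarith [hhN ▸ this]
    · intro hy
      rw [Set.mem_Ici] at hy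
      obtain ⟨M, hMN, hMy⟩ := hbig y
      obtain ⟨t, ht, hty⟩ := intermediate_value_Icc hMN hcont.continuousOn
        (Set.mem_Icc.mpr ⟨by rw [hhN]; exact hy, hMy⟩)
      exact ⟨t, Set.mem_Ici.mpr (le_trans hμN ht.1), hty⟩
  exact ⟨h0, h1, hhN, derivN, hmono,
    fun t h1t htN => key1 t h1t.le htN.le, himage0, himage1⟩
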